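/- arXiv:2110.15520 — 4 statements merged into one kernel-verified Lean document; each statement's English description precedes it below -/
import Mathlib

section
/- Let P^S, P^T be probability measures on Polish spaces X^S, X^T, and f^S : X^S -> Y_Delta, f^T : X^T -> Y_Delta measurable maps into a Polish metric space (Y_Delta, d_Y). Then inf over couplings gamma' of (P^S, P^T) of E_{(x^S, x^T) ~ gamma'}[d_Y(f^S(x^S), f^T(x^T))] equals W_{d_Y}(f^S # P^S, f^T # P^T), the Wasserstein distance between the pushforward measures. -/
open MeasureTheory ENNReal

/-- Kantorovich optimal transport cost between `μ` and `ν` for cost `c`: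
infimum over all couplings (joint measures with the given marginals). -/
noncomputable def transportCost {X Y : Type*} [MeasurableSpace X] [MeasurableSpace Y]
    (c : X → Y → ℝ≥0∞) (μ : Measure X) (ν : Measure Y) : ℝ≥0∞ :=
  ⨅ (γ : Measure (X × Y)) (_ : γ.map Prod.fst = μ ∧ γ.map Prod.snd = ν),
    ∫⁻ q, c q.1 q.2 ∂γ

section aux
open ProbabilityTheory
variable {X Y : Type*} [MeasurableSpace X] [StandardBorelSpace X] [Nonempty X]
  [MetricSpace Y] [MeasurableSpace Y] [BorelSpace Y] [PolishSpace Y]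

/-- The conditional kernel of `P.map (fun x => (f x, x))` is a.e. concentrated on the fiber. -/
lemma aux_graph (P : Measure X) [IsProbabilityMeasure P] (f : X → Y) (hf : Measurable f) :
    ∀ᵐ y ∂(P.map f),
      (P.map (fun x => (f x, x))).condKernel y {x | f x ≠ y} = 0 := by
  set ρ : Measure (Y × X) := P.map (fun x => (f x, x)) with hρ
  have hm : Measurable (fun x => (f x, x)) := hf.prodMk measurable_id
  haveI : IsProbabilityMeasure ρ := Measure.isProbabilityMeasure_map hm.aemeasurable
  have hfst : ρ.fst = P.map f := by
    rw [Measure.fst, hρ, Measure.map_map measurable_fst hm]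
    rfl
  have hset : MeasurableSet {p : Y × X | f p.2 = p.1} := by
    have : {p : Y × X | f p.2 = p.1} = (fun p : Y × X => edist (f p.2) p.1) ⁻¹' {0} := by
      ext p; simp [edist_eq_zero]
    rw [this]
    exact ((hf.comp measurable_snd).edist measurable_fst) (measurableSet_singleton 0)
  have hρs : ρ {p : Y × X | f p.2 = p.1}ᶜ = 0 := by
    rw [hρ, Measure.map_apply hm hset.compl]
    have : (fun x => (f x, x)) ⁻¹' {p : Y × X | f p.2 = p.1}ᶜ = ∅ := by
      ext x; simp
    rw [this, measure_empty]
  have hdis : ρ.fst ⊗ₘ ρ.condKernel = ρ := ρ.disintegrate ρ.condKernel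
  rw [← hdis, Measure.compProd_apply hset.compl] at hρs
  rw [← hfst]
  have hmeas : Measurable fun y => ρ.condKernel y (Prod.mk y ⁻¹' {p : Y × X | f p.2 = p.1}ᶜ) :=
    Kernel.measurable_kernel_prodMk_left hset.compl
  filter_upwards [(lintegral_eq_zero_iff hmeas).mp hρs] with y hy
  exact hy

/-- Averaging the conditional kernel against the pushforward recovers the original measure. -/
lemma aux_bind (P : Measure X) [IsProbabilityMeasure P] (f : X → Y) (hf : Measurable f)
    {s : Set X} (hs : MeasurableSet s) :
    ∫⁻ y, (P.map (fun x => (f x, x))).condKernel y s ∂(P.map f) = P s := by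
  set ρ : Measure (Y × X) := P.map (fun x => (f x, x)) with hρ
  have hm : Measurable (fun x => (f x, x)) := hf.prodMk measurable_id
  haveI : IsProbabilityMeasure ρ := Measure.isProbabilityMeasure_map hm.aemeasurable
  have hfst : ρ.fst = P.map f := by
    rw [Measure.fst, hρ, Measure.map_map measurable_fst hm]
    rfl
  have hsnd : ρ.snd = P := by
    rw [Measure.snd, hρ, Measure.map_map measurable_snd hm]
    exact Measure.map_id
  have hdis : ρ.fst ⊗ₘ ρ.condKernel = ρ := ρ.disintegrate ρ.condKernel
  conv_rhs => rw [← hsnd, Measure.snd, ← hdis,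
    Measure.map_apply measurable_snd hs, Measure.compProd_apply (measurable_snd hs)]
  rw [hfst]
  rfl

end aux

/-- the infimum over couplings of `(P^S, P^T)` of the expected label distance
`d_Y(f^S x^S, f^T x^T)` equals the Wasserstein distance between the pushforward measures
`f^S # P^S` and `f^T # P^T`. -/
theorem stmt3 {XS XT Y : Type*}
    [MeasurableSpace XS] [StandardBorelSpace XS]
    [MeasurableSpace XT] [StandardBorelSpace XT]
    [MetricSpace Y] [MeasurableSpace Y] [BorelSpace Y] [PolishSpace Y]
    (PS : Measure XS) (PT : Measure XT)
    [IsProbabilityMeasure PS] [IsProbabilityMeasure PT]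
    (fS : XS → Y) (fT : XT → Y) (hfS : Measurable fS) (hfT : Measurable fT) :
    transportCost (fun xs xt => edist (fS xs) (fT xt)) PS PT
      = transportCost (fun y1 y2 : Y => edist y1 y2) (PS.map fS) (PT.map fT) := by
  classical
  open ProbabilityTheory in
  haveI : Nonempty XS := by
    by_contra h
    rw [not_nonempty_iff] at h
    have h1 := measure_univ (μ := PS)
    rw [Set.univ_eq_empty_iff.mpr h, measure_empty] at h1
    exact zero_ne_one h1
  haveI : Nonempty XT := by
    by_contra h
    rw [not_nonempty_iff] at h
    have h1 := measure_univ (μ := PT)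
    rw [Set.univ_eq_empty_iff.mpr h, measure_empty] at h1
    exact zero_ne_one h1
  apply le_antisymm
  · -- LHS ≤ RHS : from a coupling γ of the pushforwards, build a coupling of (PS, PT)
    refine le_iInf fun γ => le_iInf fun hγ => ?_
    obtain ⟨hγ1, hγ2⟩ := hγ
    haveI : IsProbabilityMeasure (PS.map fS) := Measure.isProbabilityMeasure_map hfS.aemeasurable
    haveI : IsProbabilityMeasure (PT.map fT) := Measure.isProbabilityMeasure_map hfT.aemeasurable
    haveI : IsProbabilityMeasure γ := by
      constructor
      rw [show (Set.univ : Set (Y × Y)) = Prod.fst ⁻¹' Set.univ from rfl,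
        ← Measure.map_apply measurable_fst MeasurableSet.univ, hγ1]
      exact measure_univ
    set ρS : Measure (Y × XS) := PS.map (fun x => (fS x, x)) with hρS
    set ρT : Measure (Y × XT) := PT.map (fun x => (fT x, x)) with hρT
    haveI : IsProbabilityMeasure ρS :=
      Measure.isProbabilityMeasure_map (hfS.prodMk measurable_id).aemeasurable
    haveI : IsProbabilityMeasure ρT :=
      Measure.isProbabilityMeasure_map (hfT.prodMk measurable_id).aemeasurable
    set κS := ρS.condKernel with hκS
    set κT := ρT.condKernel with hκT
    set η : Kernel (Y × Y) (XS × XT) :=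
      (κS.comap Prod.fst measurable_fst) ×ₖ (κT.comap Prod.snd measurable_snd) with hη
    set γ' : Measure (XS × XT) := (γ ⊗ₘ η).map Prod.snd with hγ'
    have hηapp : ∀ p : Y × Y, η p = (κS p.1).prod (κT p.2) := by
      intro p
      rw [hη, Kernel.prod_apply, Kernel.comap_apply, Kernel.comap_apply]
    -- marginals of γ'
    have hmarg1 : γ'.map Prod.fst = PS := by
      ext s hs
      rw [hγ', Measure.map_map measurable_fst measurable_snd,
        Measure.map_apply (measurable_fst.comp measurable_snd) hs,
        Measure.compProd_apply ((measurable_fst.comp measurable_snd) hs)]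
      have : ∀ p : Y × Y, η p (Prod.mk p ⁻¹' ((Prod.fst ∘ Prod.snd) ⁻¹' s))
          = κS p.1 s := by
        intro p
        have hpre : (Prod.mk p ⁻¹' ((Prod.fst ∘ Prod.snd) ⁻¹' s)) = s ×ˢ (Set.univ : Set XT) := by
          ext q; simp [Set.mem_prod]
        rw [hpre, hηapp p, Measure.prod_prod, measure_univ, mul_one]
      simp_rw [this]
      refine Eq.trans ?_ (aux_bind PS fS hfS hs)
      rw [← hγ1]
      exact (lintegral_map (Kernel.measurable_coe κS hs) measurable_fst).symm
    have hmarg2 : γ'.map Prod.snd = PT := by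
      ext s hs
      rw [hγ', Measure.map_map measurable_snd measurable_snd,
        Measure.map_apply (measurable_snd.comp measurable_snd) hs,
        Measure.compProd_apply ((measurable_snd.comp measurable_snd) hs)]
      have : ∀ p : Y × Y, η p (Prod.mk p ⁻¹' ((Prod.snd ∘ Prod.snd) ⁻¹' s))
          = κT p.2 s := by
        intro p
        have hpre : (Prod.mk p ⁻¹' ((Prod.snd ∘ Prod.snd) ⁻¹' s)) = (Set.univ : Set XS) ×ˢ s := by
          ext q; simp [Set.mem_prod]
        rw [hpre, hηapp p, Measure.prod_prod, measure_univ, one_mul]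
      simp_rw [this]
      refine Eq.trans ?_ (aux_bind PT fT hfT hs)
      rw [← hγ2]
      exact (lintegral_map (Kernel.measurable_coe κT hs) measurable_snd).symm
    -- cost of γ'
    have hcostm : Measurable fun q : XS × XT => edist (fS q.1) (fT q.2) :=
      (hfS.comp measurable_fst).edist (hfT.comp measurable_snd)
    have hS := aux_graph PS fS hfS
    have hT := aux_graph PT fT hfT
    rw [← hγ1] at hS
    rw [← hγ2] at hT
    have hS' : ∀ᵐ p : Y × Y ∂γ, κS p.1 {x | fS x ≠ p.1} = 0 :=
      ae_of_ae_map measurable_fst.aemeasurable hS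
    have hT' : ∀ᵐ p : Y × Y ∂γ, κT p.2 {x | fT x ≠ p.2} = 0 :=
      ae_of_ae_map measurable_snd.aemeasurable hT
    have hcost2m : Measurable fun a : (Y × Y) × XS × XT => edist (fS a.2.1) (fT a.2.2) :=
      (hfS.comp (measurable_fst.comp measurable_snd)).edist
        (hfT.comp (measurable_snd.comp measurable_snd))
    have hcost : ∫⁻ q, edist (fS q.1) (fT q.2) ∂γ' = ∫⁻ p, edist p.1 p.2 ∂γ := by
      have e1 : ∫⁻ q, edist (fS q.1) (fT q.2) ∂γ'
          = ∫⁻ a : (Y × Y) × XS × XT, edist (fS a.2.1) (fT a.2.2) ∂(γ ⊗ₘ η) := by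
        rw [hγ']
        exact lintegral_map hcostm measurable_snd
      have e2 : ∫⁻ a : (Y × Y) × XS × XT, edist (fS a.2.1) (fT a.2.2) ∂(γ ⊗ₘ η)
          = ∫⁻ p, ∫⁻ q : XS × XT, edist (fS q.1) (fT q.2) ∂(η p) ∂γ :=
        Measure.lintegral_compProd hcost2m
      have e3 : ∫⁻ p, ∫⁻ q : XS × XT, edist (fS q.1) (fT q.2) ∂(η p) ∂γ
          = ∫⁻ p, edist p.1 p.2 ∂γ := by
        refine lintegral_congr_ae ?_
        filter_upwards [hS', hT'] with p h1 h2
        have haeS : ∀ᵐ x ∂κS p.1, fS x = p.1 := by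
          rw [ae_iff]; exact h1
        have haeT : ∀ᵐ x ∂κT p.2, fT x = p.2 := by
          rw [ae_iff]; exact h2
        show ∫⁻ q : XS × XT, edist (fS q.1) (fT q.2) ∂(η p) = edist p.1 p.2
        rw [hηapp p]
        refine Eq.trans (MeasureTheory.lintegral_prod _ hcostm.aemeasurable) ?_
        show ∫⁻ x1, ∫⁻ x2, edist (fS x1) (fT x2) ∂κT p.2 ∂κS p.1 = edist p.1 p.2
        calc ∫⁻ x1, ∫⁻ x2, edist (fS x1) (fT x2) ∂κT p.2 ∂κS p.1
            = ∫⁻ _, edist p.1 p.2 ∂κS p.1 := by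
              refine lintegral_congr_ae ?_
              filter_upwards [haeS] with x1 hx1
              show ∫⁻ x2, edist (fS x1) (fT x2) ∂κT p.2 = edist p.1 p.2
              rw [hx1]
              calc ∫⁻ x2, edist p.1 (fT x2) ∂κT p.2
                  = ∫⁻ _, edist p.1 p.2 ∂κT p.2 := by
                    refine lintegral_congr_ae ?_
                    filter_upwards [haeT] with x2 hx2
                    rw [hx2]
                _ = edist p.1 p.2 := by rw [lintegral_const, measure_univ, mul_one]
          _ = edist p.1 p.2 := by rw [lintegral_const, measure_univ, mul_one]
      exact e1.trans (e2.trans e3)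
    exact iInf₂_le_of_le γ' ⟨hmarg1, hmarg2⟩ (le_of_eq hcost)
  · -- RHS ≤ LHS : push forward a coupling of (PS, PT)
    refine le_iInf fun γ' => le_iInf fun hγ' => ?_
    obtain ⟨h1, h2⟩ := hγ'
    set γ : Measure (Y × Y) := γ'.map (Prod.map fS fT) with hγ
    have hmm : Measurable (Prod.map fS fT) := hfS.prodMap hfT
    have hm1 : γ.map Prod.fst = PS.map fS := by
      rw [hγ, Measure.map_map measurable_fst hmm, ← h1,
        Measure.map_map hfS measurable_fst]
      rfl
    have hm2 : γ.map Prod.snd = PT.map fT := by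
      rw [hγ, Measure.map_map measurable_snd hmm, ← h2,
        Measure.map_map hfT measurable_snd]
      rfl
    have hcost : ∫⁻ q : Y × Y, edist q.1 q.2 ∂γ
        = ∫⁻ q, edist (fS q.1) (fT q.2) ∂γ' := by
      rw [hγ]
      exact lintegral_map (measurable_fst.edist measurable_snd) hmm
    exact iInf₂_le_of_le γ ⟨hm1, hm2⟩ (le_of_eq hcost)
end

section
/- Let (P^S, f^S, h^S) and (P^T, f^T, h^T) be measurable labeling and hypothesis functions on Polish spaces, mapping into a bounded metric space (Y_Delta, d_Y). Suppose h^S = h o g^S and h^T = h o g^T for a common measurable h : Z -> Y_Delta in a family H, with g^S, g^T measurable feature maps, and let d_Z(z1, z2) = sup_{h in H} d_Y(h(z1), h(z2)) be a metric. Then LS(S,T) := W_{d_Y}(f^S # P^S, f^T # P^T) <= E_{P^S}[d_Y(h^S(x), f^S(x))] + E_{P^T}[d_Y(h^T(x), f^T(x))] + W_{d_Z}(g^S # P^S, g^T # P^T). -/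
open MeasureTheory ENNReal ProbabilityTheory

/-- The graph-type set of a measurable function is measurable. -/
lemma aux_measurableSet_graph {X Z : Type*} [MeasurableSpace X] [MeasurableSpace Z]
    [StandardBorelSpace Z] (g : X → Z) (hg : Measurable g) :
    MeasurableSet {q : Z × X | g q.2 = q.1} := by
  letI := upgradeStandardBorel Z
  have hd : MeasurableSet (Set.diagonal Z) := isClosed_diagonal.measurableSet
  exact ((hg.comp measurable_snd).prodMk measurable_fst) hd

/-- Reconstruction of `P` from the conditional kernel of `P.map (fun x => (g x, x))`. -/
lemma aux_rec {X Z : Type*} [MeasurableSpace X] [StandardBorelSpace X] [Nonempty X]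
    [MeasurableSpace Z] (P : Measure X) [IsProbabilityMeasure P]
    (g : X → Z) (hg : Measurable g) {s : Set X} (hs : MeasurableSet s) :
    ∫⁻ z, (P.map fun x => (g x, x)).condKernel z s ∂(P.map g) = P s := by
  set μ : Measure (Z × X) := P.map (fun x => (g x, x)) with hμ
  have hm : Measurable fun x => (g x, x) := hg.prodMk measurable_id
  haveI : IsProbabilityMeasure μ := Measure.isProbabilityMeasure_map hm.aemeasurable
  have hfst : μ.fst = P.map g := by
    rw [hμ, Measure.fst, Measure.map_map measurable_fst hm]; rfl
  have h1 : (μ.fst ⊗ₘ μ.condKernel) (Set.univ ×ˢ s) = ∫⁻ z, μ.condKernel z s ∂μ.fst := by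
    rw [Measure.compProd_apply (MeasurableSet.univ.prod hs)]
    refine lintegral_congr fun z => ?_
    congr 1
    ext x; simp
  rw [← hfst, ← h1, μ.disintegrate, hμ, Measure.map_apply hm (MeasurableSet.univ.prod hs)]
  congr 1
  ext x; simp

/-- a.e. the conditional kernel at `z` is supported on the fiber `g ⁻¹' {z}`. -/
lemma aux_fiber {X Z : Type*} [MeasurableSpace X] [StandardBorelSpace X] [Nonempty X]
    [MeasurableSpace Z] [StandardBorelSpace Z] (P : Measure X) [IsProbabilityMeasure P]
    (g : X → Z) (hg : Measurable g) :
    ∀ᵐ z ∂(P.map g), (P.map fun x => (g x, x)).condKernel z {x | g x ≠ z} = 0 := by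
  set μ : Measure (Z × X) := P.map (fun x => (g x, x)) with hμ
  have hm : Measurable fun x => (g x, x) := hg.prodMk measurable_id
  haveI : IsProbabilityMeasure μ := Measure.isProbabilityMeasure_map hm.aemeasurable
  have hfst : μ.fst = P.map g := by
    rw [hμ, Measure.fst, Measure.map_map measurable_fst hm]; rfl
  have hDm : MeasurableSet {q : Z × X | g q.2 = q.1} := aux_measurableSet_graph g hg
  have hz : μ {q : Z × X | g q.2 = q.1}ᶜ = 0 := by
    rw [hμ, Measure.map_apply hm hDm.compl]
    have : (fun x => (g x, x)) ⁻¹' {q : Z × X | g q.2 = q.1}ᶜ = ∅ := by ext x; simp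
    rw [this, measure_empty]
  have h2 : ∫⁻ z, μ.condKernel z (Prod.mk z ⁻¹' {q : Z × X | g q.2 = q.1}ᶜ) ∂μ.fst = 0 := by
    rw [← Measure.compProd_apply hDm.compl, μ.disintegrate, hz]
  rw [← hfst]
  have hmeas : Measurable fun z => μ.condKernel z (Prod.mk z ⁻¹' {q : Z × X | g q.2 = q.1}ᶜ) :=
    Kernel.measurable_kernel_prodMk_left hDm.compl
  filter_upwards [(lintegral_eq_zero_iff hmeas).mp h2] with z hz2
  have : (Prod.mk z ⁻¹' {q : Z × X | g q.2 = q.1}ᶜ) = {x | g x ≠ z} := by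
    ext x; simp
  rwa [this] at hz2

/-- Theorem 4 of the paper: with `h^S = h ∘ g^S`, `h^T = h ∘ g^T` for `h ∈ H`
and `d_Z(z1,z2) = sup_{h' ∈ H} d_Y(h'(z1), h'(z2))`,
`LS(S,T) = W_{d_Y}(f^S # P^S, f^T # P^T)
  ≤ L(h^S, f^S, P^S) + L(h^T, f^T, P^T) + W_{d_Z}(g^S # P^S, g^T # P^T)`. -/
theorem stmt9 {XS XT Z Y : Type*}
    [MeasurableSpace XS] [StandardBorelSpace XS]
    [MeasurableSpace XT] [StandardBorelSpace XT]
    [MeasurableSpace Z] [StandardBorelSpace Z]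
    [MetricSpace Y] [MeasurableSpace Y] [BorelSpace Y] [PolishSpace Y] [BoundedSpace Y]
    (PS : Measure XS) (PT : Measure XT)
    [IsProbabilityMeasure PS] [IsProbabilityMeasure PT]
    (fS : XS → Y) (fT : XT → Y) (gS : XS → Z) (gT : XT → Z)
    (hfS : Measurable fS) (hfT : Measurable fT)
    (hgS : Measurable gS) (hgT : Measurable gT)
    (H : Set (Z → Y)) (h : Z → Y) (hH : h ∈ H)
    (hmeas : ∀ h' ∈ H, Measurable h')
    (hsep : ∀ z1 z2 : Z, (∀ h' ∈ H, h' z1 = h' z2) → z1 = z2) :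
    transportCost (fun y1 y2 : Y => edist y1 y2) (PS.map fS) (PT.map fT)
      ≤ (∫⁻ x, edist (h (gS x)) (fS x) ∂PS)
        + (∫⁻ x, edist (h (gT x)) (fT x) ∂PT)
        + transportCost (fun z1 z2 : Z => ⨆ h' ∈ H, edist (h' z1) (h' z2))
            (PS.map gS) (PT.map gT) := by
  haveI : Nonempty XS := by
    by_contra hc
    rw [not_nonempty_iff] at hc
    have := measure_univ (μ := PS)
    rw [Set.univ_eq_empty_iff.mpr hc, measure_empty] at this
    exact zero_ne_one this
  haveI : Nonempty XT := by
    by_contra hc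
    rw [not_nonempty_iff] at hc
    have := measure_univ (μ := PT)
    rw [Set.univ_eq_empty_iff.mpr hc, measure_empty] at this
    exact zero_ne_one this
  have hh : Measurable h := hmeas h hH
  conv_rhs => rw [transportCost]
  simp_rw [ENNReal.add_iInf]
  refine le_iInf fun γ => le_iInf fun hγ => ?_
  obtain ⟨hγ1, hγ2⟩ := hγ
  haveI : IsProbabilityMeasure γ := by
    constructor
    have : γ.map Prod.fst Set.univ = 1 := by
      rw [hγ1, Measure.map_apply hgS MeasurableSet.univ]
      exact measure_univ
    rwa [Measure.map_apply measurable_fst MeasurableSet.univ, Set.preimage_univ] at this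
  -- conditional kernels
  set μS : Measure (Z × XS) := PS.map (fun x => (gS x, x)) with hμSdef
  set μT : Measure (Z × XT) := PT.map (fun x => (gT x, x)) with hμTdef
  haveI : IsProbabilityMeasure μS :=
    Measure.isProbabilityMeasure_map (hgS.prodMk measurable_id).aemeasurable
  haveI : IsProbabilityMeasure μT :=
    Measure.isProbabilityMeasure_map (hgT.prodMk measurable_id).aemeasurable
  set κS := μS.condKernel with hκSdef
  set κT := μT.condKernel with hκTdef
  set κ : Kernel (Z × Z) (XS × XT) :=
    (κS.comap Prod.fst measurable_fst) ×ₖ (κT.comap Prod.snd measurable_snd) with hκdef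
  haveI : IsMarkovKernel κ := by rw [hκdef]; infer_instance
  have hκval : ∀ p : Z × Z, κ p = (κS p.1).prod (κT p.2) := by
    intro p
    rw [hκdef, Kernel.prod_apply, Kernel.comap_apply, Kernel.comap_apply]
  -- marginals of γ ⊗ₘ κ
  have hmarg1 : (γ ⊗ₘ κ).map (fun q => q.2.1) = PS := by
    ext s hs
    rw [Measure.map_apply (measurable_snd.fst) hs,
      Measure.compProd_apply (measurable_snd.fst hs)]
    have hval : ∀ p : Z × Z, κ p (Prod.mk p ⁻¹' ((fun q : (Z × Z) × XS × XT => q.2.1) ⁻¹' s))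
        = κS p.1 s := by
      intro p
      have hset : (Prod.mk p ⁻¹' ((fun q : (Z × Z) × XS × XT => q.2.1) ⁻¹' s))
          = s ×ˢ Set.univ := by ext x; simp
      rw [hset, hκval p, Measure.prod_prod, measure_univ, mul_one]
    simp_rw [hval]
    rw [← lintegral_map (κS.measurable_coe hs) measurable_fst, hγ1]
    exact aux_rec PS gS hgS hs
  have hmarg2 : (γ ⊗ₘ κ).map (fun q => q.2.2) = PT := by
    ext s hs
    rw [Measure.map_apply (measurable_snd.snd) hs,
      Measure.compProd_apply (measurable_snd.snd hs)]
    have hval : ∀ p : Z × Z, κ p (Prod.mk p ⁻¹' ((fun q : (Z × Z) × XS × XT => q.2.2) ⁻¹' s))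
        = κT p.2 s := by
      intro p
      have hset : (Prod.mk p ⁻¹' ((fun q : (Z × Z) × XS × XT => q.2.2) ⁻¹' s))
          = Set.univ ×ˢ s := by ext x; simp
      rw [hset, hκval p, Measure.prod_prod, measure_univ, one_mul]
    simp_rw [hval]
    rw [← lintegral_map (κT.measurable_coe hs) measurable_snd, hγ2]
    exact aux_rec PT gT hgT hs
  -- the coupling of PS.map fS and PT.map fT
  have hF : Measurable fun q : (Z × Z) × XS × XT => (fS q.2.1, fT q.2.2) :=
    (hfS.comp measurable_snd.fst).prodMk (hfT.comp measurable_snd.snd)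
  set Γ : Measure (Y × Y) := (γ ⊗ₘ κ).map (fun q => (fS q.2.1, fT q.2.2)) with hΓdef
  have hΓ1 : Γ.map Prod.fst = PS.map fS := by
    rw [hΓdef, Measure.map_map measurable_fst hF]
    have : (Prod.fst ∘ fun q : (Z × Z) × XS × XT => (fS q.2.1, fT q.2.2))
        = fS ∘ (fun q => q.2.1) := rfl
    rw [this, ← Measure.map_map hfS measurable_snd.fst, hmarg1]
  have hΓ2 : Γ.map Prod.snd = PT.map fT := by
    rw [hΓdef, Measure.map_map measurable_snd hF]
    have : (Prod.snd ∘ fun q : (Z × Z) × XS × XT => (fS q.2.1, fT q.2.2))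
        = fT ∘ (fun q => q.2.2) := rfl
    rw [this, ← Measure.map_map hfT measurable_snd.snd, hmarg2]
  have hv : Measurable fun q : (Z × Z) × XS × XT => edist (h (gS q.2.1)) (h (gT q.2.2)) :=
    Measurable.edist (hh.comp (hgS.comp measurable_snd.fst))
      (hh.comp (hgT.comp measurable_snd.snd))
  have hw : Measurable fun q : (Z × Z) × XS × XT => edist (h (gT q.2.2)) (fT q.2.2) :=
    Measurable.edist (hh.comp (hgT.comp measurable_snd.snd)) (hfT.comp measurable_snd.snd)
  -- the a.e. fiber facts transported to γ
  have hfibS : ∀ᵐ p ∂γ, κS p.1 {x | gS x ≠ p.1} = 0 := by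
    have := aux_fiber PS gS hgS
    rw [← hγ1] at this
    exact ae_of_ae_map measurable_fst.aemeasurable this
  have hfibT : ∀ᵐ p ∂γ, κT p.2 {x | gT x ≠ p.2} = 0 := by
    have := aux_fiber PT gT hgT
    rw [← hγ2] at this
    exact ae_of_ae_map measurable_snd.aemeasurable this
  -- the three bounds
  have term1 : (∫⁻ q : (Z × Z) × XS × XT, edist (fS q.2.1) (h (gS q.2.1)) ∂(γ ⊗ₘ κ))
      = ∫⁻ x, edist (h (gS x)) (fS x) ∂PS := by
    have hm1 : Measurable fun x : XS => edist (h (gS x)) (fS x) :=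
      Measurable.edist (hh.comp hgS) hfS
    rw [← hmarg1, lintegral_map hm1 measurable_snd.fst]
    exact lintegral_congr fun q => edist_comm _ _
  have term3 : (∫⁻ q : (Z × Z) × XS × XT, edist (h (gT q.2.2)) (fT q.2.2) ∂(γ ⊗ₘ κ))
      = ∫⁻ x, edist (h (gT x)) (fT x) ∂PT := by
    have hm3 : Measurable fun x : XT => edist (h (gT x)) (fT x) :=
      Measurable.edist (hh.comp hgT) hfT
    rw [← hmarg2, lintegral_map hm3 measurable_snd.snd]
  have term2 : (∫⁻ q : (Z × Z) × XS × XT, edist (h (gS q.2.1)) (h (gT q.2.2)) ∂(γ ⊗ₘ κ))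
      ≤ ∫⁻ q : Z × Z, ⨆ h' ∈ H, edist (h' q.1) (h' q.2) ∂γ := by
    rw [Measure.lintegral_compProd hv]
    have hstep : ∀ᵐ p ∂γ, (∫⁻ x : XS × XT, edist (h (gS x.1)) (h (gT x.2)) ∂κ p)
        = edist (h p.1) (h p.2) := by
      filter_upwards [hfibS, hfibT] with p hp1 hp2
      have hmm : Measurable fun x : XS × XT => edist (h (gS x.1)) (h (gT x.2)) :=
        Measurable.edist (hh.comp (hgS.comp measurable_fst))
          (hh.comp (hgT.comp measurable_snd))
      rw [hκval p, lintegral_prod _ hmm.aemeasurable]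
      have haeS : ∀ᵐ x1 ∂(κS p.1), gS x1 = p.1 := by rw [ae_iff]; exact hp1
      have haeT : ∀ᵐ x2 ∂(κT p.2), gT x2 = p.2 := by rw [ae_iff]; exact hp2
      have hin : ∀ᵐ x1 ∂(κS p.1),
          (∫⁻ x2, edist (h (gS x1)) (h (gT x2)) ∂κT p.2) = edist (h p.1) (h p.2) := by
        filter_upwards [haeS] with x1 hx1
        have hc : ∀ᵐ x2 ∂(κT p.2),
            edist (h (gS x1)) (h (gT x2)) = edist (h p.1) (h p.2) := by
          filter_upwards [haeT] with x2 hx2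
          rw [hx1, hx2]
        rw [lintegral_congr_ae hc, lintegral_const, measure_univ, mul_one]
      rw [lintegral_congr_ae hin, lintegral_const, measure_univ, mul_one]
    rw [lintegral_congr_ae hstep]
    exact lintegral_mono fun p => le_biSup (fun h' => edist (h' p.1) (h' p.2)) hH
  calc transportCost (fun y1 y2 : Y => edist y1 y2) (PS.map fS) (PT.map fT)
      ≤ ∫⁻ q, edist q.1 q.2 ∂Γ := iInf_le_of_le Γ (iInf_le_of_le ⟨hΓ1, hΓ2⟩ le_rfl)
    _ = ∫⁻ q, edist (fS q.2.1) (fT q.2.2) ∂(γ ⊗ₘ κ) := by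
        rw [hΓdef, lintegral_map measurable_edist hF]
    _ ≤ ∫⁻ q, (edist (fS q.2.1) (h (gS q.2.1)) + edist (h (gS q.2.1)) (h (gT q.2.2))
          + edist (h (gT q.2.2)) (fT q.2.2)) ∂(γ ⊗ₘ κ) :=
        lintegral_mono fun q => edist_triangle4 _ _ _ _
    _ = (∫⁻ q, edist (fS q.2.1) (h (gS q.2.1)) ∂(γ ⊗ₘ κ))
          + (∫⁻ q, edist (h (gS q.2.1)) (h (gT q.2.2)) ∂(γ ⊗ₘ κ))
          + (∫⁻ q, edist (h (gT q.2.2)) (fT q.2.2) ∂(γ ⊗ₘ κ)) := by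
        rw [lintegral_add_right _ hw, lintegral_add_right _ hv]
    _ = ((∫⁻ q, edist (fS q.2.1) (h (gS q.2.1)) ∂(γ ⊗ₘ κ))
          + (∫⁻ q, edist (h (gT q.2.2)) (fT q.2.2) ∂(γ ⊗ₘ κ)))
          + (∫⁻ q, edist (h (gS q.2.1)) (h (gT q.2.2)) ∂(γ ⊗ₘ κ)) := by ring
    _ ≤ ((∫⁻ x, edist (h (gS x)) (fS x) ∂PS) + (∫⁻ x, edist (h (gT x)) (fT x) ∂PT))
          + (∫⁻ q : Z × Z, ⨆ h' ∈ H, edist (h' q.1) (h' q.2) ∂γ) :=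
        add_le_add (add_le_add term1.le term3.le) term2
    _ = _ := by rw [add_assoc]
end

section
/- Let P_{f^S} and P_{f^T} be probability measures supported on the simplex Delta^{M-1} in R^M. Suppose labels in {C+1, ..., M} are absent from the target, i.e., the coordinates C+1 through M of any point in the support of P_{f^T} are zero. Let Q_S, Q_T be the marginals of P_{f^S}, P_{f^T} on the first C-1 coordinates, and Q_{S\T} the marginal of P_{f^S} on coordinates C+1 through M. Then for p >= 1: W_p^p(P_{f^S}, P_{f^T}) >= W_p^p(Q_S, Q_T) + E_{X ~ Q_{S\T}}[||X||_p^p]. -/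
set_option maxHeartbeats 1000000


open MeasureTheory ENNReal

/-- partial-set bound: if `P_{f^S}, P_{f^T}` are supported on the simplex in
`ℝ^M` and the target has no mass on the labels `C+1, …, M`, then
`W_p^p(P_{f^S}, P_{f^T}) ≥ W_p^p(Q_S, Q_T) + E_{X ~ Q_{S∖T}}[‖X‖_p^p]`, where `Q_S, Q_T` are
the marginals on the first `C - 1` coordinates and `Q_{S∖T}` is the marginal of `P_{f^S}`
on coordinates `C+1, …, M`. -/
theorem stmt11 (M C : ℕ) (hC1 : 1 ≤ C) (hCM : C ≤ M) (p : ℝ) (hp : 1 ≤ p)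
    (μ ν : Measure (Fin M → ℝ)) [IsProbabilityMeasure μ] [IsProbabilityMeasure ν]
    (hμsimp : μ {x | ¬ ((∀ i, 0 ≤ x i) ∧ ∑ i, x i = 1)} = 0)
    (hνsimp : ν {x | ¬ ((∀ i, 0 ≤ x i) ∧ ∑ i, x i = 1)} = 0)
    (hνzero : ν {x | ¬ ∀ i : Fin (M - C), x ⟨C + i.1, by have := i.2; omega⟩ = 0} = 0) :
    transportCost (fun x y => ∑ i, ENNReal.ofReal (|x i - y i| ^ p))
        (μ.map fun x (i : Fin (C - 1)) => x (Fin.castLE (by omega) i))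
        (ν.map fun x (i : Fin (C - 1)) => x (Fin.castLE (by omega) i))
      + (∫⁻ x, (∑ i, ENNReal.ofReal (|x i| ^ p))
          ∂(μ.map fun x (i : Fin (M - C)) => x ⟨C + i.1, by have := i.2; omega⟩))
      ≤ transportCost (fun x y => ∑ i, ENNReal.ofReal (|x i - y i| ^ p)) μ ν := by
  classical
  refine le_iInf fun γ => le_iInf fun hγ => ?_
  obtain ⟨hγ1, hγ2⟩ := hγ
  -- projection maps
  set f1 : (Fin M → ℝ) → (Fin (C - 1) → ℝ) :=
    fun x i => x (Fin.castLE (by omega) i) with hf1def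
  set f2 : (Fin M → ℝ) → (Fin (M - C) → ℝ) :=
    fun x i => x ⟨C + i.1, by have := i.2; omega⟩ with hf2def
  have mf1 : Measurable f1 := measurable_pi_lambda _ fun i => measurable_pi_apply _
  have mf2 : Measurable f2 := measurable_pi_lambda _ fun i => measurable_pi_apply _
  -- measurability of cost functions
  have mcost : ∀ {n : ℕ}, Measurable fun q : (Fin n → ℝ) × (Fin n → ℝ) =>
      ∑ i, ENNReal.ofReal (|q.1 i - q.2 i| ^ p) := by
    intro n
    refine Finset.measurable_sum _ fun i _ => ?_
    exact ENNReal.measurable_ofReal.comp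
      ((Real.continuous_rpow_const (by linarith : (0:ℝ) ≤ p)).measurable.comp
        (((measurable_pi_apply i).comp measurable_fst).sub
          ((measurable_pi_apply i).comp measurable_snd)).abs)
  -- Term 1: bound the transport cost between marginals via the pushforward coupling
  have h1 : transportCost (fun x y => ∑ i, ENNReal.ofReal (|x i - y i| ^ p))
      (μ.map f1) (ν.map f1)
      ≤ ∫⁻ q, ∑ i, ENNReal.ofReal (|f1 q.1 i - f1 q.2 i| ^ p) ∂γ := by
    have hmap1 : (γ.map (Prod.map f1 f1)).map Prod.fst = μ.map f1 := by
      rw [Measure.map_map measurable_fst (mf1.prodMap mf1), ← hγ1,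
        Measure.map_map mf1 measurable_fst]
      rfl
    have hmap2 : (γ.map (Prod.map f1 f1)).map Prod.snd = ν.map f1 := by
      rw [Measure.map_map measurable_snd (mf1.prodMap mf1), ← hγ2,
        Measure.map_map mf1 measurable_snd]
      rfl
    refine le_trans (iInf₂_le (γ.map (Prod.map f1 f1)) ⟨hmap1, hmap2⟩) ?_
    rw [lintegral_map mcost (mf1.prodMap mf1)]
    exact le_rfl
  -- Term 2: rewrite as an integral over γ
  have h2 : (∫⁻ x, (∑ i, ENNReal.ofReal (|x i| ^ p)) ∂(μ.map f2))
      = ∫⁻ q, ∑ i, ENNReal.ofReal (|f2 q.1 i| ^ p) ∂γ := by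
    have mg : Measurable fun x : Fin (M - C) → ℝ => ∑ i, ENNReal.ofReal (|x i| ^ p) := by
      refine Finset.measurable_sum _ fun i _ => ?_
      exact ENNReal.measurable_ofReal.comp
        ((Real.continuous_rpow_const (by linarith : (0:ℝ) ≤ p)).measurable.comp
          (measurable_pi_apply i).abs)
    rw [← hγ1, Measure.map_map mf2 measurable_fst, lintegral_map mg (mf2.comp measurable_fst)]
    rfl
  -- a.e. the second coordinate has vanishing tail
  have hae : ∀ᵐ q ∂γ, ∀ i : Fin (M - C), q.2 ⟨C + i.1, by have := i.2; omega⟩ = 0 := by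
    have hS : MeasurableSet {x : Fin M → ℝ |
        ¬ ∀ i : Fin (M - C), x ⟨C + i.1, by have := i.2; omega⟩ = 0} := by
      have : {x : Fin M → ℝ | ¬ ∀ i : Fin (M - C), x ⟨C + i.1, by have := i.2; omega⟩ = 0}
          = (⋂ i : Fin (M - C), {x | x ⟨C + i.1, by have := i.2; omega⟩ = 0})ᶜ := by
        ext x; simp
      rw [this]
      exact (MeasurableSet.iInter fun i =>
        measurableSet_eq_fun (measurable_pi_apply _) measurable_const).compl
    have : γ ((fun q : (Fin M → ℝ) × (Fin M → ℝ) => q.2) ⁻¹'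
        {x | ¬ ∀ i : Fin (M - C), x ⟨C + i.1, by have := i.2; omega⟩ = 0}) = 0 := by
      rw [← Measure.map_apply measurable_snd hS, hγ2]
      exact hνzero
    rw [ae_iff]
    convert this using 2
    rfl
  -- combine
  rw [h2]
  have mA : Measurable fun q : (Fin M → ℝ) × (Fin M → ℝ) =>
      ∑ i, ENNReal.ofReal (|f1 q.1 i - f1 q.2 i| ^ p) := by
    refine Finset.measurable_sum _ fun i _ => ?_
    exact ENNReal.measurable_ofReal.comp
      ((Real.continuous_rpow_const (by linarith : (0:ℝ) ≤ p)).measurable.comp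
        (((measurable_pi_apply _).comp measurable_fst).sub
          ((measurable_pi_apply _).comp measurable_snd)).abs)
  calc transportCost (fun x y => ∑ i, ENNReal.ofReal (|x i - y i| ^ p))
        (μ.map f1) (ν.map f1)
      + ∫⁻ q, ∑ i, ENNReal.ofReal (|f2 q.1 i| ^ p) ∂γ
      ≤ (∫⁻ q, ∑ i, ENNReal.ofReal (|f1 q.1 i - f1 q.2 i| ^ p) ∂γ)
        + ∫⁻ q, ∑ i, ENNReal.ofReal (|f2 q.1 i| ^ p) ∂γ := add_le_add_left h1 _
    _ = ∫⁻ q, ((∑ i, ENNReal.ofReal (|f1 q.1 i - f1 q.2 i| ^ p))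
        + ∑ i, ENNReal.ofReal (|f2 q.1 i| ^ p)) ∂γ := (lintegral_add_left mA _).symm
    _ ≤ _ := ?_
  refine lintegral_mono_ae ?_
  filter_upwards [hae] with q hq
  have key : (∑ i, ENNReal.ofReal (|f1 q.1 i - f1 q.2 i| ^ p))
      + ∑ i : Fin (M - C), ENNReal.ofReal (|f2 q.1 i| ^ p)
      ≤ ∑ i : Fin M, ENNReal.ofReal (|q.1 i - q.2 i| ^ p) := by
    have e2eq : ∀ i : Fin (M - C), ENNReal.ofReal (|f2 q.1 i| ^ p)
        = ENNReal.ofReal (|q.1 ⟨C + i.1, by have := i.2; omega⟩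
          - q.2 ⟨C + i.1, by have := i.2; omega⟩| ^ p) := by
      intro i
      rw [hq i, sub_zero]
    simp only [e2eq]
    -- embeddings
    set e1 : Fin (C - 1) ↪ Fin M :=
      ⟨fun i => Fin.castLE (by omega) i, fun a b h => by
        apply Fin.ext; have := congrArg Fin.val h; simpa using this⟩ with he1
    set e2 : Fin (M - C) ↪ Fin M :=
      ⟨fun i => ⟨C + i.1, by have := i.2; omega⟩, fun a b h => by
        apply Fin.ext; have := congrArg Fin.val h; simp only at this; omega⟩ with he2
    have hs1 : (∑ i : Fin (C - 1), ENNReal.ofReal (|f1 q.1 i - f1 q.2 i| ^ p))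
        = ∑ j ∈ Finset.univ.map e1, ENNReal.ofReal (|q.1 j - q.2 j| ^ p) := by
      rw [Finset.sum_map]; rfl
    have hs2 : (∑ i : Fin (M - C), ENNReal.ofReal
          (|q.1 ⟨C + i.1, by have := i.2; omega⟩ - q.2 ⟨C + i.1, by have := i.2; omega⟩| ^ p))
        = ∑ j ∈ Finset.univ.map e2, ENNReal.ofReal (|q.1 j - q.2 j| ^ p) := by
      rw [Finset.sum_map]; rfl
    rw [hs1, hs2, ← Finset.sum_union]
    · exact Finset.sum_le_sum_of_subset (Finset.subset_univ _)
    · rw [Finset.disjoint_left]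
      rintro a ha hb
      simp only [Finset.mem_map, Finset.mem_univ, true_and] at ha hb
      obtain ⟨i, hi⟩ := ha
      obtain ⟨j, hj⟩ := hb
      have h1' : (a : ℕ) = (i : ℕ) := by rw [← hi]; rfl
      have h2' : (a : ℕ) = C + (j : ℕ) := by rw [← hj]; rfl
      have := i.2
      omega
  exact key
end

section
/- Anti-causal label-shift bound: suppose the source and target distributions share conditional distributions, i.e., P^S = sum_{y=1}^M p_Y^S(y) pi_y and P^T = sum_{y=1}^M p_Y^T(y) pi_y for common conditional measures pi_y, and f^S, f^T map into Delta^{M-1} subset of R^M. Then for p >= 1, W_p^p(f^S # P^S, f^T # P^T) <= M^p * ||p_Y^S - p_Y^T||_1 + min{ E_{P^S}[||f^S - f^T||_p^p], E_{P^T}[||f^S - f^T||_p^p] }. -/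
open MeasureTheory ENNReal

private lemma map_finset_sum_meas {α β ι : Type*} [MeasurableSpace α] [MeasurableSpace β]
    {f : α → β} (hf : Measurable f) (s : Finset ι) (μ : ι → Measure α) :
    (∑ i ∈ s, μ i).map f = ∑ i ∈ s, (μ i).map f := by
  induction s using Finset.cons_induction with
  | empty => simp
  | cons a s ha ih => rw [Finset.sum_cons, Finset.sum_cons, Measure.map_add _ _ hf, ih]

set_option maxHeartbeats 1000000 in
/-- anti-causal label-shift bound: if `P^S = ∑_y p_Y^S(y) π_y` and
`P^T = ∑_y p_Y^T(y) π_y` share the conditionals `π_y`, and `f^S, f^T` map into the simplex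
`Δ^{M-1} ⊆ ℝ^M`, then
`W_p^p(f^S # P^S, f^T # P^T) ≤ M^p ‖p_Y^S - p_Y^T‖_1 + min(E_{P^S}‖f^S - f^T‖_p^p, E_{P^T}‖f^S - f^T‖_p^p)`. -/
theorem stmt14 {X : Type*} [MeasurableSpace X] (M : ℕ) (hM : 0 < M) (p : ℝ) (hp : 1 ≤ p)
    (π : Fin M → Measure X) [∀ y, IsProbabilityMeasure (π y)]
    (pS pT : Fin M → ℝ) (hpS0 : ∀ y, 0 ≤ pS y) (hpT0 : ∀ y, 0 ≤ pT y)
    (hpS1 : ∑ y, pS y = 1) (hpT1 : ∑ y, pT y = 1)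
    (fS fT : X → Fin M → ℝ) (hfS : Measurable fS) (hfT : Measurable fT)
    (hfSsimp : ∀ x, (∀ i, 0 ≤ fS x i) ∧ ∑ i, fS x i = 1)
    (hfTsimp : ∀ x, (∀ i, 0 ≤ fT x i) ∧ ∑ i, fT x i = 1) :
    transportCost (fun u v => ∑ i, ENNReal.ofReal (|u i - v i| ^ p))
        ((∑ y, ENNReal.ofReal (pS y) • π y).map fS)
        ((∑ y, ENNReal.ofReal (pT y) • π y).map fT)
      ≤ ENNReal.ofReal ((M : ℝ) ^ p) * ENNReal.ofReal (∑ y, |pS y - pT y|)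
        + min
          (∫⁻ x, ∑ i, ENNReal.ofReal (|fS x i - fT x i| ^ p)
              ∂(∑ y, ENNReal.ofReal (pS y) • π y))
          (∫⁻ x, ∑ i, ENNReal.ofReal (|fS x i - fT x i| ^ p)
              ∂(∑ y, ENNReal.ofReal (pT y) • π y)) := by
  classical
  have hp0 : 0 ≤ p := by linarith
  set PS : Measure X := ∑ y, ENNReal.ofReal (pS y) • π y with hPSdef
  set PT : Measure X := ∑ y, ENNReal.ofReal (pT y) • π y with hPTdef
  set m : Fin M → ℝ := fun y => min (pS y) (pT y) with hmdef
  set aS : Fin M → ℝ := fun y => pS y - m y with haSdef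
  set aT : Fin M → ℝ := fun y => pT y - m y with haTdef
  have hm0 : ∀ y, 0 ≤ m y := fun y => le_min (hpS0 y) (hpT0 y)
  have haS0 : ∀ y, 0 ≤ aS y := fun y => sub_nonneg.2 (min_le_left _ _)
  have haT0 : ∀ y, 0 ≤ aT y := fun y => sub_nonneg.2 (min_le_right _ _)
  set r : ℝ := ∑ y, aS y with hrdef
  have hr0 : 0 ≤ r := Finset.sum_nonneg fun y _ => haS0 y
  have hrT : ∑ y, aT y = r := by
    simp only [haTdef, haSdef, hrdef, Finset.sum_sub_distrib, hpS1, hpT1]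
  -- the measures used to build the coupling
  set μS : Measure X := ∑ y, ENNReal.ofReal (aS y) • π y with hμSdef
  set μT : Measure X := ∑ y, ENNReal.ofReal (aT y) • π y with hμTdef
  set γd : Measure (X × X) := ∑ y, ENNReal.ofReal (m y) • (π y).map (fun x => (x, x))
    with hγddef
  set γo : Measure (X × X) := (ENNReal.ofReal r)⁻¹ • (μS.prod μT) with hγodef
  set Γ : Measure (X × X) := γd + γo with hΓdef
  have hμSuniv : μS Set.univ = ENNReal.ofReal r := by
    rw [hμSdef, hrdef, ENNReal.ofReal_sum_of_nonneg (fun y _ => haS0 y)]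
    simp [Measure.finset_sum_apply]
  have hμTuniv : μT Set.univ = ENNReal.ofReal r := by
    rw [hμTdef, ← hrT, ENNReal.ofReal_sum_of_nonneg (fun y _ => haT0 y)]
    simp [Measure.finset_sum_apply]
  haveI : IsFiniteMeasure μS := ⟨by rw [hμSuniv]; exact ofReal_lt_top⟩
  haveI : IsFiniteMeasure μT := ⟨by rw [hμTuniv]; exact ofReal_lt_top⟩
  have hμS0 : r = 0 → μS = 0 := by
    intro h
    have h2 : ∀ y ∈ Finset.univ, aS y = 0 :=
      (Finset.sum_eq_zero_iff_of_nonneg (fun y _ => haS0 y)).1 (hrdef.symm.trans h)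
    rw [hμSdef]
    refine Finset.sum_eq_zero fun y _ => ?_
    rw [h2 y (Finset.mem_univ y)]; simp
  have hμT0 : r = 0 → μT = 0 := by
    intro h
    have h2 : ∀ y ∈ Finset.univ, aT y = 0 :=
      (Finset.sum_eq_zero_iff_of_nonneg (fun y _ => haT0 y)).1 (hrT.trans h)
    rw [hμTdef]
    refine Finset.sum_eq_zero fun y _ => ?_
    rw [h2 y (Finset.mem_univ y)]; simp
  have hd : Measurable fun x : X => (x, x) := measurable_id.prodMk measurable_id
  set g : X × X → (Fin M → ℝ) × (Fin M → ℝ) := fun q => (fS q.1, fT q.2) with hgdef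
  have hg : Measurable g := (hfS.comp measurable_fst).prodMk (hfT.comp measurable_snd)
  -- marginals of the diagonal part
  have hγdfst : γd.map Prod.fst = ∑ y, ENNReal.ofReal (m y) • π y := by
    rw [hγddef, map_finset_sum_meas measurable_fst]
    refine Finset.sum_congr rfl fun y _ => ?_
    rw [Measure.map_smul, Measure.map_map measurable_fst hd]
    simp [Function.comp_def]
  have hγdsnd : γd.map Prod.snd = ∑ y, ENNReal.ofReal (m y) • π y := by
    rw [hγddef, map_finset_sum_meas measurable_snd]
    refine Finset.sum_congr rfl fun y _ => ?_
    rw [Measure.map_smul, Measure.map_map measurable_snd hd]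
    simp [Function.comp_def]
  have hrne : r ≠ 0 → (ENNReal.ofReal r ≠ 0 ∧ ENNReal.ofReal r ≠ ⊤) := fun h =>
    ⟨(ENNReal.ofReal_pos.2 (lt_of_le_of_ne hr0 (Ne.symm h))).ne', ofReal_ne_top⟩
  have hγofst : γo.map Prod.fst = μS := by
    rw [hγodef, Measure.map_smul, Measure.map_fst_prod, hμTuniv, smul_smul]
    rcases eq_or_ne r 0 with h | h
    · rw [hμS0 h]; simp
    · rw [ENNReal.inv_mul_cancel (hrne h).1 (hrne h).2, one_smul]
  have hγosnd : γo.map Prod.snd = μT := by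
    rw [hγodef, Measure.map_smul, Measure.map_snd_prod, hμSuniv, smul_smul]
    rcases eq_or_ne r 0 with h | h
    · rw [hμT0 h]; simp
    · rw [ENNReal.inv_mul_cancel (hrne h).1 (hrne h).2, one_smul]
  have hΓfst : Γ.map Prod.fst = PS := by
    rw [hΓdef, Measure.map_add _ _ measurable_fst, hγdfst, hγofst, hμSdef, hPSdef,
      ← Finset.sum_add_distrib]
    refine Finset.sum_congr rfl fun y _ => ?_
    rw [← add_smul, ← ENNReal.ofReal_add (hm0 y) (haS0 y)]
    congr 1
    simp [haSdef]
  have hΓsnd : Γ.map Prod.snd = PT := by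
    rw [hΓdef, Measure.map_add _ _ measurable_snd, hγdsnd, hγosnd, hμTdef, hPTdef,
      ← Finset.sum_add_distrib]
    refine Finset.sum_congr rfl fun y _ => ?_
    rw [← add_smul, ← ENNReal.ofReal_add (hm0 y) (haT0 y)]
    congr 1
    simp [haTdef]
  set γ : Measure ((Fin M → ℝ) × (Fin M → ℝ)) := Γ.map g with hγdef
  have hmarg1 : γ.map Prod.fst = PS.map fS := by
    rw [hγdef, Measure.map_map measurable_fst hg]
    have h1 : (Prod.fst ∘ g) = fS ∘ Prod.fst := rfl
    rw [h1, ← Measure.map_map hfS measurable_fst, hΓfst]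
  have hmarg2 : γ.map Prod.snd = PT.map fT := by
    rw [hγdef, Measure.map_map measurable_snd hg]
    have h1 : (Prod.snd ∘ g) = fT ∘ Prod.snd := rfl
    rw [h1, ← Measure.map_map hfT measurable_snd, hΓsnd]
  -- measurability of the cost
  have hc : Measurable fun q : (Fin M → ℝ) × (Fin M → ℝ) =>
      ∑ i, ENNReal.ofReal (|q.1 i - q.2 i| ^ p) := by
    apply Finset.measurable_sum
    intro i _
    exact ((continuous_id.rpow_const (fun _ => Or.inr hp0)).measurable.comp
      (((measurable_pi_apply i).comp measurable_fst).sub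
        ((measurable_pi_apply i).comp measurable_snd)).abs).ennreal_ofReal
  have hF : Measurable fun q : X × X => ∑ i, ENNReal.ofReal (|fS q.1 i - fT q.2 i| ^ p) := by
    apply Finset.measurable_sum
    intro i _
    exact ((continuous_id.rpow_const (fun _ => Or.inr hp0)).measurable.comp
      (((measurable_pi_apply i).comp (hfS.comp measurable_fst)).sub
        ((measurable_pi_apply i).comp (hfT.comp measurable_snd))).abs).ennreal_ofReal
  -- pointwise bound on the simplex
  have hptwise : ∀ x₁ x₂ : X,
      (∑ i, ENNReal.ofReal (|fS x₁ i - fT x₂ i| ^ p)) ≤ ENNReal.ofReal ((M : ℝ) ^ p) := by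
    intro x₁ x₂
    have h1 : ∀ i, ENNReal.ofReal (|fS x₁ i - fT x₂ i| ^ p) ≤ 1 := by
      intro i
      obtain ⟨huS, hsS⟩ := hfSsimp x₁
      obtain ⟨huT, hsT⟩ := hfTsimp x₂
      have hui : fS x₁ i ≤ 1 := hsS ▸ Finset.single_le_sum (fun j _ => huS j) (Finset.mem_univ i)
      have hvi : fT x₂ i ≤ 1 := hsT ▸ Finset.single_le_sum (fun j _ => huT j) (Finset.mem_univ i)
      have habs : |fS x₁ i - fT x₂ i| ≤ 1 :=
        abs_le.2 ⟨by linarith [huS i, huT i], by linarith [huS i, huT i]⟩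
      calc ENNReal.ofReal (|fS x₁ i - fT x₂ i| ^ p)
          ≤ ENNReal.ofReal 1 :=
            ENNReal.ofReal_le_ofReal (Real.rpow_le_one (abs_nonneg _) habs hp0)
        _ = 1 := ofReal_one
    calc (∑ i, ENNReal.ofReal (|fS x₁ i - fT x₂ i| ^ p))
        ≤ ∑ _i : Fin M, (1 : ℝ≥0∞) := Finset.sum_le_sum fun i _ => h1 i
      _ = (M : ℝ≥0∞) := by simp
      _ = ENNReal.ofReal (M : ℝ) := (ENNReal.ofReal_natCast M).symm
      _ ≤ ENNReal.ofReal ((M : ℝ) ^ p) := by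
          refine ENNReal.ofReal_le_ofReal ?_
          calc (M : ℝ) = (M : ℝ) ^ (1 : ℝ) := (Real.rpow_one _).symm
            _ ≤ (M : ℝ) ^ p := Real.rpow_le_rpow_of_exponent_le (by exact_mod_cast hM) hp
  -- the transport cost is at most the cost of our particular coupling
  have hstep : transportCost (fun u v => ∑ i, ENNReal.ofReal (|u i - v i| ^ p))
      (PS.map fS) (PT.map fT)
      ≤ ∫⁻ q, ∑ i, ENNReal.ofReal (|fS q.1 i - fT q.2 i| ^ p) ∂Γ := by
    have h1 := iInf₂_le (f := fun (γ' : Measure ((Fin M → ℝ) × (Fin M → ℝ)))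
      (_ : γ'.map Prod.fst = PS.map fS ∧ γ'.map Prod.snd = PT.map fT) =>
        ∫⁻ q, ∑ i, ENNReal.ofReal (|q.1 i - q.2 i| ^ p) ∂γ') γ ⟨hmarg1, hmarg2⟩
    refine le_trans (le_of_eq ?_) (le_trans h1 (le_of_eq ?_))
    · rfl
    · rw [hγdef, lintegral_map hc hg]
  refine hstep.trans ?_
  rw [hΓdef, lintegral_add_measure]
  -- bound on the diagonal part
  have hdiag : (∫⁻ q, ∑ i, ENNReal.ofReal (|fS q.1 i - fT q.2 i| ^ p) ∂γd)
      = ∑ y, ENNReal.ofReal (m y) *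
          ∫⁻ x, ∑ i, ENNReal.ofReal (|fS x i - fT x i| ^ p) ∂(π y) := by
    rw [hγddef, lintegral_finset_sum_measure]
    refine Finset.sum_congr rfl fun y _ => ?_
    rw [lintegral_smul_measure, lintegral_map hF hd, smul_eq_mul]
  have hPSint : (∫⁻ x, ∑ i, ENNReal.ofReal (|fS x i - fT x i| ^ p) ∂PS)
      = ∑ y, ENNReal.ofReal (pS y) *
          ∫⁻ x, ∑ i, ENNReal.ofReal (|fS x i - fT x i| ^ p) ∂(π y) := by
    rw [hPSdef, lintegral_finset_sum_measure]
    refine Finset.sum_congr rfl fun y _ => ?_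
    rw [lintegral_smul_measure, smul_eq_mul]
  have hPTint : (∫⁻ x, ∑ i, ENNReal.ofReal (|fS x i - fT x i| ^ p) ∂PT)
      = ∑ y, ENNReal.ofReal (pT y) *
          ∫⁻ x, ∑ i, ENNReal.ofReal (|fS x i - fT x i| ^ p) ∂(π y) := by
    rw [hPTdef, lintegral_finset_sum_measure]
    refine Finset.sum_congr rfl fun y _ => ?_
    rw [lintegral_smul_measure, smul_eq_mul]
  have hdiag_le : (∫⁻ q, ∑ i, ENNReal.ofReal (|fS q.1 i - fT q.2 i| ^ p) ∂γd)
      ≤ min (∫⁻ x, ∑ i, ENNReal.ofReal (|fS x i - fT x i| ^ p) ∂PS)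
            (∫⁻ x, ∑ i, ENNReal.ofReal (|fS x i - fT x i| ^ p) ∂PT) := by
    refine le_min ?_ ?_
    · rw [hdiag, hPSint]
      refine Finset.sum_le_sum fun y _ => ?_
      exact mul_le_mul_left (ENNReal.ofReal_le_ofReal (min_le_left _ _)) _
    · rw [hdiag, hPTint]
      refine Finset.sum_le_sum fun y _ => ?_
      exact mul_le_mul_left (ENNReal.ofReal_le_ofReal (min_le_right _ _)) _
  -- bound on the off-diagonal part
  have hγouniv : γo Set.univ ≤ ENNReal.ofReal r := by
    rw [hγodef, Measure.smul_apply, smul_eq_mul, ← Set.univ_prod_univ, Measure.prod_prod,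
      hμSuniv, hμTuniv]
    rcases eq_or_ne r 0 with h | h
    · simp [h]
    · rw [← mul_assoc, ENNReal.inv_mul_cancel (hrne h).1 (hrne h).2, one_mul]
  have hrle : r ≤ ∑ y, |pS y - pT y| := by
    rw [hrdef]
    refine Finset.sum_le_sum fun y _ => ?_
    rcases le_total (pS y) (pT y) with h | h
    · have : m y = pS y := min_eq_left h
      simp only [haSdef, this, sub_self]
      exact abs_nonneg _
    · have hmy : m y = pT y := min_eq_right h
      simp only [haSdef, hmy]
      rw [abs_of_nonneg (sub_nonneg.2 h)]
  have hoff_le : (∫⁻ q, ∑ i, ENNReal.ofReal (|fS q.1 i - fT q.2 i| ^ p) ∂γo)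
      ≤ ENNReal.ofReal ((M : ℝ) ^ p) * ENNReal.ofReal (∑ y, |pS y - pT y|) := by
    calc (∫⁻ q, ∑ i, ENNReal.ofReal (|fS q.1 i - fT q.2 i| ^ p) ∂γo)
        ≤ ∫⁻ _, ENNReal.ofReal ((M : ℝ) ^ p) ∂γo :=
          lintegral_mono fun q => hptwise q.1 q.2
      _ = ENNReal.ofReal ((M : ℝ) ^ p) * γo Set.univ := lintegral_const _
      _ ≤ ENNReal.ofReal ((M : ℝ) ^ p) * ENNReal.ofReal r := mul_le_mul_right hγouniv _
      _ ≤ ENNReal.ofReal ((M : ℝ) ^ p) * ENNReal.ofReal (∑ y, |pS y - pT y|) :=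
          mul_le_mul_right (ENNReal.ofReal_le_ofReal hrle) _
  calc (∫⁻ q, ∑ i, ENNReal.ofReal (|fS q.1 i - fT q.2 i| ^ p) ∂γd)
        + ∫⁻ q, ∑ i, ENNReal.ofReal (|fS q.1 i - fT q.2 i| ^ p) ∂γo
      ≤ (min (∫⁻ x, ∑ i, ENNReal.ofReal (|fS x i - fT x i| ^ p) ∂PS)
            (∫⁻ x, ∑ i, ENNReal.ofReal (|fS x i - fT x i| ^ p) ∂PT))
        + ENNReal.ofReal ((M : ℝ) ^ p) * ENNReal.ofReal (∑ y, |pS y - pT y|) :=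
        add_le_add hdiag_le hoff_le
    _ = ENNReal.ofReal ((M : ℝ) ^ p) * ENNReal.ofReal (∑ y, |pS y - pT y|)
        + min (∫⁻ x, ∑ i, ENNReal.ofReal (|fS x i - fT x i| ^ p) ∂PS)
            (∫⁻ x, ∑ i, ENNReal.ofReal (|fS x i - fT x i| ^ p) ∂PT) := add_comm _ _
end
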